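/- The Werner state ρ_β = (I + βF)/(d² + βd) on C^d ⊗ C^d (with −1 ≤ β ≤ 1, F the swap operator) is 1-distillable if β < −1/2: there exists a Schmidt-rank-2 unit vector ψ with ⟨ψ, ρ_β^{T_B} ψ⟩ < 0. Conversely, for β ≥ −1/2 every Schmidt-rank-2 unit vector ψ satisfies ⟨ψ, ρ_β^{T_B} ψ⟩ ≥ 0. -/

import Mathlib

open scoped BigOperators ComplexConjugate ComplexOrder

noncomputable section

/-- The swap (flip) operator `F` on `ℂ^d ⊗ ℂ^d`. -/
def swapOp (d : ℕ) : Matrix (Fin d × Fin d) (Fin d × Fin d) ℂ :=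
  fun p q => if p.1 = q.2 ∧ p.2 = q.1 then 1 else 0

/-- The Werner state `ρ_β = (I + β F)/(d² + β d)`. -/
def werner (d : ℕ) (β : ℝ) : Matrix (Fin d × Fin d) (Fin d × Fin d) ℂ :=
  ((1 / ((d : ℝ) ^ 2 + β * d) : ℝ) : ℂ) •
    ((1 : Matrix (Fin d × Fin d) (Fin d × Fin d) ℂ) + (β : ℂ) • swapOp d)

/-- The partial transpose on the second tensor factor. -/
def ptB {d : ℕ} (ρ : Matrix (Fin d × Fin d) (Fin d × Fin d) ℂ) :
    Matrix (Fin d × Fin d) (Fin d × Fin d) ℂ :=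
  fun p q => ρ (p.1, q.2) (q.1, p.2)

lemma ptB_werner_apply (d : ℕ) (β : ℝ) (p q : Fin d × Fin d) :
    ptB (werner d β) p q =
      ((1 / ((d : ℝ) ^ 2 + β * d) : ℝ) : ℂ) *
        ((if p = q then 1 else 0) +
          (β : ℂ) * ((if p.1 = p.2 then 1 else 0) * (if q.1 = q.2 then 1 else 0))) := by
  simp only [ptB, werner, Matrix.smul_apply, Matrix.add_apply, Matrix.one_apply, swapOp,
    smul_eq_mul, Prod.mk.injEq]
  congr 1
  have e1 : (p.1 = q.1 ∧ q.2 = p.2) ↔ p = q := by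
    rw [Prod.ext_iff]
    exact and_congr_right fun _ => eq_comm
  have e2 : (p.1 = p.2 ∧ q.2 = q.1) ↔ (p.1 = p.2 ∧ q.1 = q.2) :=
    and_congr_right fun _ => eq_comm
  rw [if_congr e1 rfl rfl, if_congr e2 rfl rfl]
  by_cases h3 : p.1 = p.2 <;> by_cases h4 : q.1 = q.2 <;> simp [h3, h4]

lemma expect_eq (d : ℕ) (β : ℝ) (ψ : Fin d × Fin d → ℂ) :
    (dotProduct (star ψ) ((ptB (werner d β)).mulVec ψ)).re =
      (1 / ((d : ℝ) ^ 2 + β * d)) *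
        ((∑ p, Complex.normSq (ψ p)) + β * Complex.normSq (∑ i, ψ (i, i))) := by
  set C : ℂ := ((1 / ((d : ℝ) ^ 2 + β * d) : ℝ) : ℂ) with hC
  set T : ℂ := ∑ i, ψ (i, i) with hT
  have hmv : ∀ p, (ptB (werner d β)).mulVec ψ p =
      C * (ψ p + (β : ℂ) * ((if p.1 = p.2 then 1 else 0) * T)) := by
    intro p
    simp only [Matrix.mulVec, dotProduct, ptB_werner_apply, ← hC]
    have hterm : ∀ x : Fin d × Fin d,
        C * ((if p = x then (1:ℂ) else 0) +
          (β : ℂ) * ((if p.1 = p.2 then 1 else 0) * (if x.1 = x.2 then 1 else 0))) * ψ x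
        = C * ((if p = x then ψ x else 0) +
          (β : ℂ) * ((if p.1 = p.2 then (1:ℂ) else 0) * (if x.1 = x.2 then ψ x else 0))) := by
      intro x
      by_cases h1 : p = x <;> by_cases h2 : x.1 = x.2 <;> simp [h1, h2] <;> ring
    rw [Finset.sum_congr rfl fun x _ => hterm x, ← Finset.mul_sum, Finset.sum_add_distrib]
    have h1 : ∑ x : Fin d × Fin d, (if p = x then ψ x else 0) = ψ p := by simp
    have h2 : ∑ x : Fin d × Fin d, (if x.1 = x.2 then ψ x else 0) = T := by
      rw [hT, Fintype.sum_prod_type]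
      simp
    rw [h1, ← Finset.mul_sum, ← Finset.mul_sum, h2]
  have key : dotProduct (star ψ) ((ptB (werner d β)).mulVec ψ) =
      C * (((∑ p, Complex.normSq (ψ p) : ℝ) : ℂ) +
        (β : ℂ) * ((Complex.normSq T : ℝ) : ℂ)) := by
    simp only [dotProduct, Pi.star_apply, RCLike.star_def, hmv]
    have hterm : ∀ p : Fin d × Fin d,
        (starRingEnd ℂ) (ψ p) * (C * (ψ p + (β : ℂ) * ((if p.1 = p.2 then 1 else 0) * T)))
        = C * ((starRingEnd ℂ) (ψ p) * ψ p +
            (β : ℂ) * ((if p.1 = p.2 then (starRingEnd ℂ) (ψ p) else 0) * T)) := by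
      intro p
      by_cases h : p.1 = p.2 <;> simp [h] <;> ring
    rw [Finset.sum_congr rfl fun p _ => hterm p, ← Finset.mul_sum, Finset.sum_add_distrib]
    have h1 : ∑ p : Fin d × Fin d, (starRingEnd ℂ) (ψ p) * ψ p
        = ((∑ p, Complex.normSq (ψ p) : ℝ) : ℂ) := by
      push_cast
      exact Finset.sum_congr rfl fun p _ => by
        rw [Complex.normSq_eq_conj_mul_self]
    have h2 : ∑ p : Fin d × Fin d, (if p.1 = p.2 then (starRingEnd ℂ) (ψ p) else 0)
        = (starRingEnd ℂ) T := by
      rw [hT, map_sum, Fintype.sum_prod_type]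
      simp
    have h3 : ∑ p : Fin d × Fin d,
        (β : ℂ) * ((if p.1 = p.2 then (starRingEnd ℂ) (ψ p) else 0) * T)
        = (β : ℂ) * ((Complex.normSq T : ℝ) : ℂ) := by
      rw [← Finset.mul_sum]
      congr 1
      rw [← Finset.sum_mul, h2, ← Complex.normSq_eq_conj_mul_self]
    rw [h1, h3]
  rw [key, hC]
  norm_cast

lemma normSq_eq_norm_sq (z : ℂ) : Complex.normSq z = ‖z‖ ^ 2 := by
  rw [Complex.normSq_eq_norm_sq]

lemma cs_normSq (d : ℕ) (u v : Fin d → ℂ) :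
    Complex.normSq (∑ i, u i * v i) ≤
      (∑ i, Complex.normSq (u i)) * (∑ i, Complex.normSq (v i)) := by
  have h1 : ‖∑ i, u i * v i‖ ≤ ∑ i, ‖u i‖ * ‖v i‖ := by
    refine (norm_sum_le _ _).trans_eq ?_
    exact Finset.sum_congr rfl fun i _ => norm_mul _ _
  have h2 : (∑ i, ‖u i‖ * ‖v i‖) ^ 2 ≤ (∑ i, ‖u i‖ ^ 2) * (∑ i, ‖v i‖ ^ 2) :=
    Finset.sum_mul_sq_le_sq_mul_sq _ _ _
  rw [normSq_eq_norm_sq]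
  calc ‖∑ i, u i * v i‖ ^ 2 ≤ (∑ i, ‖u i‖ * ‖v i‖) ^ 2 := by
        apply pow_le_pow_left₀ (norm_nonneg _) h1
    _ ≤ (∑ i, ‖u i‖ ^ 2) * (∑ i, ‖v i‖ ^ 2) := h2
    _ = (∑ i, Complex.normSq (u i)) * (∑ i, Complex.normSq (v i)) := by
        congr 1 <;> exact Finset.sum_congr rfl fun i _ => (normSq_eq_norm_sq _).symm

lemma ortho_case (d : ℕ) (w0 w1 x0 x1 : Fin d → ℂ)
    (h : ∑ i, (starRingEnd ℂ) (w0 i) * w1 i = 0) :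
    Complex.normSq (∑ i, (w0 i * x0 i + w1 i * x1 i)) ≤
      2 * ∑ p : Fin d × Fin d,
        Complex.normSq (w0 p.1 * x0 p.2 + w1 p.1 * x1 p.2) := by
  set Sw0 := ∑ i, Complex.normSq (w0 i) with hSw0
  set Sw1 := ∑ i, Complex.normSq (w1 i) with hSw1
  set Sx0 := ∑ i, Complex.normSq (x0 i) with hSx0
  set Sx1 := ∑ i, Complex.normSq (x1 i) with hSx1
  have hRHS : ∑ p : Fin d × Fin d,
      Complex.normSq (w0 p.1 * x0 p.2 + w1 p.1 * x1 p.2) = Sw0 * Sx0 + Sw1 * Sx1 := by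
    have hexp : ∀ p : Fin d × Fin d,
        Complex.normSq (w0 p.1 * x0 p.2 + w1 p.1 * x1 p.2) =
          Complex.normSq (w0 p.1) * Complex.normSq (x0 p.2) +
          Complex.normSq (w1 p.1) * Complex.normSq (x1 p.2) +
          2 * ((w0 p.1 * x0 p.2) * (starRingEnd ℂ) (w1 p.1 * x1 p.2)).re := by
      intro p
      rw [Complex.normSq_add, Complex.normSq_mul, Complex.normSq_mul]
    rw [Finset.sum_congr rfl fun p _ => hexp p]
    rw [Finset.sum_add_distrib, Finset.sum_add_distrib]
    have e1 : ∑ p : Fin d × Fin d,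
        Complex.normSq (w0 p.1) * Complex.normSq (x0 p.2) = Sw0 * Sx0 := by
      rw [Fintype.sum_prod_type]
      exact (Finset.sum_mul_sum Finset.univ Finset.univ
        (fun i => Complex.normSq (w0 i)) (fun j => Complex.normSq (x0 j))).symm
    have e2 : ∑ p : Fin d × Fin d,
        Complex.normSq (w1 p.1) * Complex.normSq (x1 p.2) = Sw1 * Sx1 := by
      rw [Fintype.sum_prod_type]
      exact (Finset.sum_mul_sum Finset.univ Finset.univ
        (fun i => Complex.normSq (w1 i)) (fun j => Complex.normSq (x1 j))).symm
    have e3 : ∑ p : Fin d × Fin d,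
        2 * ((w0 p.1 * x0 p.2) * (starRingEnd ℂ) (w1 p.1 * x1 p.2)).re = 0 := by
      have hz : ∑ p : Fin d × Fin d,
          (w0 p.1 * x0 p.2) * (starRingEnd ℂ) (w1 p.1 * x1 p.2) = 0 := by
        have hfact : ∑ p : Fin d × Fin d,
            (w0 p.1 * x0 p.2) * (starRingEnd ℂ) (w1 p.1 * x1 p.2)
            = (∑ i, w0 i * (starRingEnd ℂ) (w1 i)) * (∑ j, x0 j * (starRingEnd ℂ) (x1 j)) := by
          rw [Finset.sum_mul_sum, Fintype.sum_prod_type]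
          refine Finset.sum_congr rfl fun i _ => Finset.sum_congr rfl fun j _ => ?_
          simp only [map_mul]; ring
        have hz0 : (∑ i, w0 i * (starRingEnd ℂ) (w1 i)) = 0 := by
          have := congrArg (starRingEnd ℂ) h
          simpa [map_sum, map_mul, mul_comm] using this
        rw [hfact, hz0, zero_mul]
      rw [← Finset.mul_sum, ← Complex.re_sum, hz, Complex.zero_re, mul_zero]
    rw [e1, e2, e3, add_zero]
  rw [hRHS]
  -- LHS bound
  have hsplit : (∑ i, (w0 i * x0 i + w1 i * x1 i))
      = (∑ i, w0 i * x0 i) + (∑ i, w1 i * x1 i) := Finset.sum_add_distrib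
  set t0 := ∑ i, w0 i * x0 i
  set t1 := ∑ i, w1 i * x1 i
  have c0 : Complex.normSq t0 ≤ Sw0 * Sx0 := cs_normSq d w0 x0
  have c1 : Complex.normSq t1 ≤ Sw1 * Sx1 := cs_normSq d w1 x1
  have htri : ‖t0 + t1‖ ≤ ‖t0‖ + ‖t1‖ := norm_add_le _ _
  have h2 : Complex.normSq (t0 + t1) ≤ 2 * (Complex.normSq t0 + Complex.normSq t1) := by
    rw [normSq_eq_norm_sq, normSq_eq_norm_sq, normSq_eq_norm_sq]
    nlinarith [norm_nonneg t0, norm_nonneg t1, norm_nonneg (t0 + t1), sq_nonneg (‖t0‖ - ‖t1‖)]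
  rw [hsplit]
  linarith

lemma key_ineq (d : ℕ) (u0 u1 v0 v1 : Fin d → ℂ) :
    Complex.normSq (∑ i, (u0 i * v0 i + u1 i * v1 i)) ≤
      2 * ∑ p : Fin d × Fin d,
        Complex.normSq (u0 p.1 * v0 p.2 + u1 p.1 * v1 p.2) := by
  by_cases h0 : ∑ i, (starRingEnd ℂ) (u0 i) * u0 i = 0
  · -- u0 = 0, already orthogonal to u1
    have hz : ∀ i, u0 i = 0 := by
      have hsum : ∑ i, Complex.normSq (u0 i) = 0 := by
        have h' : ((∑ i, Complex.normSq (u0 i) : ℝ) : ℂ) = 0 := by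
          rw [Complex.ofReal_sum, ← h0]
          exact Finset.sum_congr rfl fun i _ => by
            rw [Complex.normSq_eq_conj_mul_self]
        exact_mod_cast h'
      intro i
      have := (Finset.sum_eq_zero_iff_of_nonneg
        (fun i _ => Complex.normSq_nonneg (u0 i))).mp hsum i (Finset.mem_univ i)
      exact Complex.normSq_eq_zero.mp this
    have horth : ∑ i, (starRingEnd ℂ) (u0 i) * u1 i = 0 := by
      refine Finset.sum_eq_zero fun i _ => by rw [hz i, map_zero, zero_mul]
    exact ortho_case d u0 u1 v0 v1 horth
  · set α : ℂ := (∑ i, (starRingEnd ℂ) (u0 i) * u1 i) / (∑ i, (starRingEnd ℂ) (u0 i) * u0 i)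
      with hα
    have horth : ∑ i, (starRingEnd ℂ) (u0 i) * (u1 i - α * u0 i) = 0 := by
      have : ∑ i, (starRingEnd ℂ) (u0 i) * (u1 i - α * u0 i)
          = (∑ i, (starRingEnd ℂ) (u0 i) * u1 i)
            - α * (∑ i, (starRingEnd ℂ) (u0 i) * u0 i) := by
        rw [Finset.mul_sum, ← Finset.sum_sub_distrib]
        exact Finset.sum_congr rfl fun i _ => by ring
      rw [this, hα, div_mul_cancel₀ _ h0, sub_self]
    have hpt : ∀ i j, u0 i * v0 j + u1 i * v1 j
        = u0 i * (v0 j + α * v1 j) + (u1 i - α * u0 i) * v1 j := fun i j => by ring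
    have := ortho_case d u0 (fun i => u1 i - α * u0 i) (fun j => v0 j + α * v1 j) v1 horth
    calc Complex.normSq (∑ i, (u0 i * v0 i + u1 i * v1 i))
        = Complex.normSq (∑ i, (u0 i * (v0 i + α * v1 i) + (u1 i - α * u0 i) * v1 i)) := by
          rw [Finset.sum_congr rfl fun i _ => hpt i i]
      _ ≤ 2 * ∑ p : Fin d × Fin d,
            Complex.normSq (u0 p.1 * (v0 p.2 + α * v1 p.2) + (u1 p.1 - α * u0 p.1) * v1 p.2) :=
          this
      _ = 2 * ∑ p : Fin d × Fin d,
            Complex.normSq (u0 p.1 * v0 p.2 + u1 p.1 * v1 p.2) := by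
          congr 1
          exact Finset.sum_congr rfl fun p _ => by rw [← hpt p.1 p.2]

/-- The Werner state is 1-distillable iff `β < −1/2`: for `β < −1/2` some
Schmidt-rank-2 unit vector has negative expectation on `ρ_β^{T_B}`, and for
`β ≥ −1/2` every Schmidt-rank-2 unit vector has nonnegative expectation. -/
theorem werner_one_distillability (d : ℕ) (hd : 2 ≤ d) (β : ℝ)
    (hβ1 : -1 ≤ β) (hβ2 : β ≤ 1) :
    (β < -(1 / 2) → ∃ ψ : Fin d × Fin d → ℂ,
        (∃ a b : Fin 2 → Fin d → ℂ, ∀ p, ψ p = ∑ i, a i p.1 * b i p.2) ∧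
        (∑ p, ‖ψ p‖ ^ 2 = 1) ∧
        (dotProduct (star ψ) ((ptB (werner d β)).mulVec ψ)).re < 0) ∧
    (-(1 / 2) ≤ β → ∀ ψ : Fin d × Fin d → ℂ,
        (∃ a b : Fin 2 → Fin d → ℂ, ∀ p, ψ p = ∑ i, a i p.1 * b i p.2) →
        (∑ p, ‖ψ p‖ ^ 2 = 1) →
        0 ≤ (dotProduct (star ψ) ((ptB (werner d β)).mulVec ψ)).re) := by
  have hd2 : (2 : ℝ) ≤ (d : ℝ) := by exact_mod_cast hd
  have hden : 0 < (d : ℝ) ^ 2 + β * d := by nlinarith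
  have hc : 0 < 1 / ((d : ℝ) ^ 2 + β * d) := by positivity
  constructor
  · -- distillable direction
    intro hβ
    set ι : Fin 2 → Fin d := fun k => ⟨k.val, by omega⟩ with hιdef
    have hι : ι 0 ≠ ι 1 := by simp [hιdef, Fin.ext_iff]
    set s : ℂ := (((Real.sqrt 2)⁻¹ : ℝ) : ℂ) with hsdef
    have hs_norm : ‖s‖ ^ 2 = 2⁻¹ := by
      rw [hsdef, Complex.norm_real, Real.norm_eq_abs, abs_of_nonneg (by positivity), inv_pow,
        Real.sq_sqrt (by norm_num : (0:ℝ) ≤ 2)]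
    have hs_normSq : Complex.normSq s = 2⁻¹ := by
      rw [normSq_eq_norm_sq, hs_norm]
    have hs_abs : ‖s‖ ^ 2 = (2⁻¹ : ℝ) := by
      exact hs_norm
    set a : Fin 2 → Fin d → ℂ := fun k j => if j = ι k then 1 else 0 with hadef
    set b : Fin 2 → Fin d → ℂ := fun k j => if j = ι k then s else 0 with hbdef
    set ψ : Fin d × Fin d → ℂ := fun p => ∑ k : Fin 2, a k p.1 * b k p.2 with hψdef
    have hψ : ∀ p : Fin d × Fin d,
        ψ p = (if p = (ι 0, ι 0) then s else 0) + (if p = (ι 1, ι 1) then s else 0) := by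
      intro p
      rw [hψdef]
      simp only [Fin.sum_univ_two, hadef, hbdef]
      by_cases h1 : p.1 = ι 0 <;> by_cases h2 : p.2 = ι 0 <;> by_cases h3 : p.1 = ι 1 <;>
        by_cases h4 : p.2 = ι 1 <;> simp [h1, h2, h3, h4, Prod.ext_iff, hι, Ne.symm hι]
    have hnormsum : ∑ p, ‖ψ p‖ ^ 2 = 1 := by
      have hterm : ∀ p : Fin d × Fin d, ‖ψ p‖ ^ 2 =
          (if p = (ι 0, ι 0) then (2⁻¹ : ℝ) else 0) +
          (if p = (ι 1, ι 1) then (2⁻¹ : ℝ) else 0) := by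
        intro p
        rw [hψ p]
        by_cases h1 : p = (ι 0, ι 0) <;> by_cases h2 : p = (ι 1, ι 1) <;>
          simp [h1, h2, hs_norm, hs_abs, hι, Ne.symm hι]
      rw [Finset.sum_congr rfl fun p _ => hterm p, Finset.sum_add_distrib]
      simp only [Finset.sum_ite_eq', Finset.mem_univ, ite_true]
      norm_num
    have hT : (∑ i, ψ (i, i)) = 2 * s := by
      have hterm : ∀ i : Fin d, ψ (i, i) =
          (if i = ι 0 then s else 0) + (if i = ι 1 then s else 0) := by
        intro i
        rw [hψ (i, i)]
        congr 1 <;> congr 1 <;> simp [Prod.ext_iff, and_self]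
      rw [Finset.sum_congr rfl fun i _ => hterm i, Finset.sum_add_distrib]
      simp only [Finset.sum_ite_eq', Finset.mem_univ, ite_true]
      ring
    refine ⟨ψ, ⟨a, b, fun p => rfl⟩, hnormsum, ?_⟩
    rw [expect_eq]
    have hψsum : ∑ p, Complex.normSq (ψ p) = 1 := by
      rw [← hnormsum]
      exact Finset.sum_congr rfl fun p _ => normSq_eq_norm_sq (ψ p)
    rw [hψsum, hT]
    have h2s : Complex.normSq (2 * s) = 2 := by
      rw [Complex.normSq_mul, hs_normSq]
      norm_num [Complex.normSq_ofNat]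
    rw [h2s]
    apply mul_neg_of_pos_of_neg hc
    linarith
  · -- non-distillable direction
    intro hβ ψ hrep hnorm
    obtain ⟨a, b, hab⟩ := hrep
    rw [expect_eq]
    have h1 : ∀ p : Fin d × Fin d, ψ p = a 0 p.1 * b 0 p.2 + a 1 p.1 * b 1 p.2 := by
      intro p
      rw [hab p, Fin.sum_univ_two]
    have hψsum : ∑ p, Complex.normSq (ψ p) = 1 := by
      rw [← hnorm]
      exact Finset.sum_congr rfl fun p _ => normSq_eq_norm_sq (ψ p)
    have hq2 : Complex.normSq (∑ i, ψ (i, i)) ≤ 2 := by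
      calc Complex.normSq (∑ i, ψ (i, i))
          = Complex.normSq (∑ i, (a 0 i * b 0 i + a 1 i * b 1 i)) := by
            rw [Finset.sum_congr rfl fun i _ => h1 (i, i)]
        _ ≤ 2 * ∑ p : Fin d × Fin d,
              Complex.normSq (a 0 p.1 * b 0 p.2 + a 1 p.1 * b 1 p.2) :=
            key_ineq d (a 0) (a 1) (b 0) (b 1)
        _ = 2 * ∑ p, Complex.normSq (ψ p) := by
            congr 1
            exact Finset.sum_congr rfl fun p _ => by rw [← h1 p]
        _ = 2 := by rw [hψsum]; norm_num
    have hq0 : 0 ≤ Complex.normSq (∑ i, ψ (i, i)) := Complex.normSq_nonneg _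
    rw [hψsum]
    apply mul_nonneg hc.le
    nlinarith [mul_nonneg (by linarith : (0:ℝ) ≤ β + 1/2) hq0]
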